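/- Let L_c : ℝ^d → ℝ be convex and β-smooth, let g₁, g₂ ∈ ℝ^d with ‖g₁‖, ‖g₂‖ ≤ G, and suppose L_c(w - η g₁) ≤ L_c(w - η g₂) for some η > 0. Then ⟨g₁, ∇L_c(w)⟩ ≥ ⟨g₂, ∇L_c(w)⟩ - βG²η. -/

import Mathlib

open scoped RealInnerProductSpace


lemma aux_line_hasDerivAt {d : ℕ} (Lc : EuclideanSpace ℝ (Fin d) → ℝ)
    (gradLc : EuclideanSpace ℝ (Fin d) → EuclideanSpace ℝ (Fin d))
    (hgrad : ∀ x, HasGradientAt Lc (gradLc x) x)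
    (x v : EuclideanSpace ℝ (Fin d)) (t : ℝ) :
    HasDerivAt (fun t => Lc (x + t • v)) ⟪gradLc (x + t • v), v⟫ t := by
  have h1 : HasDerivAt (fun t : ℝ => x + t • v) v t := by
    simpa using ((hasDerivAt_id t).smul_const v).const_add x
  have h2 := (hasGradientAt_iff_hasFDerivAt.mp (hgrad (x + t • v)))
  have := h2.comp_hasDerivAt t h1
  simp only [InnerProductSpace.toDual_apply_apply] at this
  exact this

-- first-order convexity
lemma aux_convex_lb {d : ℕ} (Lc : EuclideanSpace ℝ (Fin d) → ℝ)
    (gradLc : EuclideanSpace ℝ (Fin d) → EuclideanSpace ℝ (Fin d))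
    (hconv : ConvexOn ℝ Set.univ Lc)
    (hgrad : ∀ x, HasGradientAt Lc (gradLc x) x)
    (x v : EuclideanSpace ℝ (Fin d)) :
    Lc x + ⟪gradLc x, v⟫ ≤ Lc (x + v) := by
  set φ : ℝ → ℝ := fun t => Lc (x + t • v) with hφ
  have hder := aux_line_hasDerivAt Lc gradLc hgrad x v 0
  have hφconv : ConvexOn ℝ Set.univ φ := by
    have := hconv.comp_affineMap (AffineMap.lineMap x (x + v))
    have heq : φ = Lc ∘ ⇑(AffineMap.lineMap x (x + v)) := by
      funext t
      simp [φ, AffineMap.lineMap_apply, add_comm]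
    rw [heq]
    simpa using this
  have hslope := hφconv.le_slope_of_hasDerivAt (Set.mem_univ (0:ℝ))
    (Set.mem_univ (1:ℝ)) one_pos (by simpa only [zero_smul, add_zero] using hder)
  have heq2 : slope φ 0 1 = φ 1 - φ 0 := by simp [slope]
  rw [heq2] at hslope
  simp only [φ, zero_smul, add_zero, one_smul] at hslope
  linarith

-- descent lemma
lemma aux_smooth_ub {d : ℕ} (Lc : EuclideanSpace ℝ (Fin d) → ℝ)
    (gradLc : EuclideanSpace ℝ (Fin d) → EuclideanSpace ℝ (Fin d))
    (β : ℝ) (hβ : 0 ≤ β)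
    (hgrad : ∀ x, HasGradientAt Lc (gradLc x) x)
    (hlip : ∀ x y, ‖gradLc x - gradLc y‖ ≤ β * ‖x - y‖)
    (x v : EuclideanSpace ℝ (Fin d)) :
    Lc (x + v) ≤ Lc x + ⟪gradLc x, v⟫ + β / 2 * ‖v‖ ^ 2 := by
  set c : ℝ := ⟪gradLc x, v⟫ with hc
  set ψ : ℝ → ℝ := fun t => Lc x + t * c + β * t ^ 2 * ‖v‖ ^ 2 / 2 - Lc (x + t • v) with hψ
  have hψd : ∀ t : ℝ, HasDerivAt ψ (c + β * t * ‖v‖ ^ 2 - ⟪gradLc (x + t • v), v⟫) t := by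
    intro t
    have h1 := aux_line_hasDerivAt Lc gradLc hgrad x v t
    have h2 : HasDerivAt (fun t : ℝ => Lc x + t * c + β * t ^ 2 * ‖v‖ ^ 2 / 2)
        (c + β * (2 * t) * ‖v‖ ^ 2 / 2) t := by
      have ha : HasDerivAt (fun t : ℝ => t * c) c t := by
        simpa using (hasDerivAt_id t).mul_const c
      have hb : HasDerivAt (fun t : ℝ => β * t ^ 2 * ‖v‖ ^ 2 / 2)
          (β * (2 * t) * ‖v‖ ^ 2 / 2) t := by
        have := (hasDerivAt_pow 2 t).const_mul β
        simpa [mul_comm, mul_assoc, mul_left_comm] using ((this.mul_const (‖v‖ ^ 2)).div_const 2)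
      exact (ha.const_add (Lc x)).add hb
    have := h2.sub h1
    exact this.congr_deriv (by ring)
  have hdiff : Differentiable ℝ ψ := fun t => (hψd t).differentiableAt
  have hmono : MonotoneOn ψ (Set.Icc (0:ℝ) 1) := by
    apply monotoneOn_of_deriv_nonneg (convex_Icc 0 1) hdiff.continuous.continuousOn
      (hdiff.differentiableOn.mono interior_subset)
    intro t ht
    rw [interior_Icc, Set.mem_Ioo] at ht
    rw [(hψd t).deriv]
    have h1 : ⟪gradLc (x + t • v), v⟫ - c = ⟪gradLc (x + t • v) - gradLc x, v⟫ := by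
      rw [inner_sub_left]
    have h2 : ⟪gradLc (x + t • v) - gradLc x, v⟫ ≤ ‖gradLc (x + t • v) - gradLc x‖ * ‖v‖ :=
      real_inner_le_norm _ _
    have h3 : ‖gradLc (x + t • v) - gradLc x‖ ≤ β * ‖t • v‖ := by
      simpa using hlip (x + t • v) x
    have h4 : ‖t • v‖ = t * ‖v‖ := by
      rw [norm_smul, Real.norm_eq_abs, abs_of_pos ht.1]
    have h5 : ‖gradLc (x + t • v) - gradLc x‖ * ‖v‖ ≤ β * t * ‖v‖ ^ 2 := by
      rw [h4] at h3
      nlinarith [norm_nonneg v, norm_nonneg (gradLc (x + t • v) - gradLc x)]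
    linarith
  have hout := hmono (Set.left_mem_Icc.mpr zero_le_one) (Set.right_mem_Icc.mpr zero_le_one)
    zero_le_one
  simp only [ψ, zero_smul, add_zero, one_smul, zero_mul, one_mul, one_pow] at hout
  linarith


/-- If `g₁` achieves smaller post-step loss than `g₂`, its inner product with the
holdout gradient is nearly as large: ⟨g₁,∇L_c(w)⟩ ≥ ⟨g₂,∇L_c(w)⟩ - βG²η. -/
theorem holdout_comparison {d : ℕ}
    (Lc : EuclideanSpace ℝ (Fin d) → ℝ)
    (gradLc : EuclideanSpace ℝ (Fin d) → EuclideanSpace ℝ (Fin d))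
    (β G : ℝ) (hβ : 0 ≤ β) (hG : 0 ≤ G)
    (hconv : ConvexOn ℝ Set.univ Lc)
    (hgrad : ∀ x, HasGradientAt Lc (gradLc x) x)
    (hlip : ∀ x y, ‖gradLc x - gradLc y‖ ≤ β * ‖x - y‖)
    (g₁ g₂ : EuclideanSpace ℝ (Fin d)) (hg₁ : ‖g₁‖ ≤ G) (hg₂ : ‖g₂‖ ≤ G)
    (w : EuclideanSpace ℝ (Fin d)) (η : ℝ) (hη : 0 < η)
    (hle : Lc (w - η • g₁) ≤ Lc (w - η • g₂)) :
    ⟪g₁, gradLc w⟫ ≥ ⟪g₂, gradLc w⟫ - β * G ^ 2 * η := by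
  have hA := aux_convex_lb Lc gradLc hconv hgrad w (-(η • g₁))
  have hB := aux_smooth_ub Lc gradLc β hβ hgrad hlip w (-(η • g₂))
  rw [← sub_eq_add_neg] at hA hB
  have hi1 : ⟪gradLc w, -(η • g₁)⟫ = -(η * ⟪g₁, gradLc w⟫) := by
    rw [inner_neg_right, real_inner_smul_right, real_inner_comm]
  have hi2 : ⟪gradLc w, -(η • g₂)⟫ = -(η * ⟪g₂, gradLc w⟫) := by
    rw [inner_neg_right, real_inner_smul_right, real_inner_comm]
  have hn : ‖-(η • g₂)‖ = η * ‖g₂‖ := by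
    rw [norm_neg, norm_smul, Real.norm_eq_abs, abs_of_pos hη]
  rw [hi1] at hA
  rw [hi2, hn] at hB
  have hg₂0 : (0:ℝ) ≤ ‖g₂‖ := norm_nonneg _
  have h6 : ‖g₂‖ ^ 2 ≤ G ^ 2 := by nlinarith
  have hfin : η * (⟪g₂, gradLc w⟫ - ⟪g₁, gradLc w⟫) ≤ β / 2 * η ^ 2 * G ^ 2 := by
    nlinarith [mul_le_mul_of_nonneg_left h6 (by positivity : (0:ℝ) ≤ β / 2 * η ^ 2)]
  have h7 : β / 2 * η ^ 2 * G ^ 2 ≤ β * G ^ 2 * η * η := by nlinarith [sq_nonneg (G * η)]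
  have h8 := hfin.trans h7
  rw [ge_iff_le, ← sub_nonneg, ← mul_nonneg_iff_of_pos_left hη]
  nlinarith
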